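/- (Proposition: local Lipschitz continuity of the relaxed value function.) For every t ≥ 0 and every bound b > 0 there exists a constant c > 0 such that for all n×n symmetric positive definite matrices M₁, M₂ with ‖M₁‖_F ≤ b and ‖M₂‖_F ≤ b, one has |U^o_t(M₁) − U^o_t(M₂)| ≤ c · ‖M₁ − M₂‖_F. -/

import Mathlib

open Matrix Finset

/-- The Frobenius norm of a real matrix. -/
noncomputable def frob {n m : ℕ} (M : Matrix (Fin n) (Fin m) ℝ) : ℝ :=
  Real.sqrt (∑ i, ∑ j, (M i j) ^ 2)

/-- `h(A,Q,M) = Aᵀ M A + Q`. -/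
def hfun {n : ℕ} (A Q M : Matrix (Fin n) (Fin n) ℝ) : Matrix (Fin n) (Fin n) ℝ :=
  Aᵀ * M * A + Q

/-- The probability simplex condition for a relaxed schedule. -/
def isRelaxedSchedule {N : ℕ} (θ : ℕ → Fin N → ℝ) : Prop :=
  ∀ k, (∀ i, 0 ≤ θ k i) ∧ ∑ i, θ k i = 1

/-- The cost of a relaxed schedule `θ` over horizon `{0,…,t}` with terminal condition
`K_{t+1} = K`, where `K_{k|k+1} = (K_{k+1}⁻¹ + ∑_i θ_k^i V_k(i))⁻¹` and
`K_k = h(A_k,Q_k,K_{k|k+1})`.  Here `W k` denotes `W̄_{k−1}`. -/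
noncomputable def relaxCost {n N : ℕ}
    (A Q W : ℕ → Matrix (Fin n) (Fin n) ℝ)
    (V : ℕ → Fin N → Matrix (Fin n) (Fin n) ℝ)
    (θ : ℕ → Fin N → ℝ) : ℕ → Matrix (Fin n) (Fin n) ℝ → ℝ
  | 0, K => (((K⁻¹ + ∑ i, θ 0 i • V 0 i)⁻¹) * W 0).trace
  | (t + 1), K =>
      (((K⁻¹ + ∑ i, θ (t + 1) i • V (t + 1) i)⁻¹) * W (t + 1)).trace +
        relaxCost A Q W V θ t
          (hfun (A (t + 1)) (Q (t + 1)) ((K⁻¹ + ∑ i, θ (t + 1) i • V (t + 1) i)⁻¹))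

/-- The relaxed value function `U^o_t(K)`. -/
noncomputable def valueUo {n N : ℕ}
    (A Q W : ℕ → Matrix (Fin n) (Fin n) ℝ)
    (V : ℕ → Fin N → Matrix (Fin n) (Fin n) ℝ)
    (t : ℕ) (K : Matrix (Fin n) (Fin n) ℝ) : ℝ :=
  ⨅ θ : {θ : ℕ → Fin N → ℝ // isRelaxedSchedule θ}, relaxCost A Q W V θ.1 t K

/-! ### Auxiliary lemmas about the Frobenius norm -/

attribute [local instance] Matrix.frobeniusSeminormedAddCommGroup Matrix.frobeniusNormedRing

section FrobLemmas
variable {n : ℕ}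

lemma frob_eq_norm (M : Matrix (Fin n) (Fin n) ℝ) : frob M = ‖M‖ := by
  rw [Matrix.frobenius_norm_def, frob, Real.sqrt_eq_rpow]
  congr 1
  refine Finset.sum_congr rfl fun i _ => Finset.sum_congr rfl fun j _ => ?_
  rw [show ((2:ℝ)) = ((2:ℕ):ℝ) by norm_num, Real.rpow_natCast, Real.norm_eq_abs, sq_abs]

lemma frob_nonneg (M : Matrix (Fin n) (Fin n) ℝ) : 0 ≤ frob M := Real.sqrt_nonneg _

lemma frob_mul_le (A B : Matrix (Fin n) (Fin n) ℝ) : frob (A * B) ≤ frob A * frob B := by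
  simp only [frob_eq_norm]; exact norm_mul_le _ _

lemma frob_add_le (A B : Matrix (Fin n) (Fin n) ℝ) : frob (A + B) ≤ frob A + frob B := by
  simp only [frob_eq_norm]; exact norm_add_le _ _

lemma frob_sub_rev (A B : Matrix (Fin n) (Fin n) ℝ) : frob (A - B) = frob (B - A) := by
  simp only [frob_eq_norm]; exact norm_sub_rev _ _

lemma frob_transpose (A : Matrix (Fin n) (Fin n) ℝ) : frob Aᵀ = frob A := by
  simp only [frob_eq_norm]; exact Matrix.frobenius_norm_transpose _

lemma frob_smul (c : ℝ) (M : Matrix (Fin n) (Fin n) ℝ) : frob (c • M) = |c| * frob M := by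
  unfold frob
  rw [← Real.sqrt_sq_eq_abs, ← Real.sqrt_mul (sq_nonneg c), Finset.mul_sum]
  congr 1
  refine Finset.sum_congr rfl fun i _ => ?_
  rw [Finset.mul_sum]
  refine Finset.sum_congr rfl fun j _ => ?_
  simp [mul_pow]

lemma frob_sum_le {α : Type*} (s : Finset α) (f : α → Matrix (Fin n) (Fin n) ℝ) :
    frob (∑ i ∈ s, f i) ≤ ∑ i ∈ s, frob (f i) := by
  simp only [frob_eq_norm]; exact norm_sum_le _ _

lemma entry_abs_le_frob (M : Matrix (Fin n) (Fin n) ℝ) (i j : Fin n) : |M i j| ≤ frob M := by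
  rw [← Real.sqrt_sq_eq_abs]
  apply Real.sqrt_le_sqrt
  calc (M i j) ^ 2 ≤ ∑ j', (M i j') ^ 2 :=
        Finset.single_le_sum (f := fun j' => (M i j') ^ 2) (fun k _ => sq_nonneg _)
          (Finset.mem_univ j)
    _ ≤ ∑ i', ∑ j', (M i' j') ^ 2 :=
        Finset.single_le_sum (f := fun i' => ∑ j', (M i' j') ^ 2)
          (fun k _ => Finset.sum_nonneg fun _ _ => sq_nonneg _) (Finset.mem_univ i)

lemma trace_abs_le (M : Matrix (Fin n) (Fin n) ℝ) : |M.trace| ≤ n * frob M := by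
  calc |M.trace| = |∑ i, M i i| := by rw [Matrix.trace]; rfl
    _ ≤ ∑ i : Fin n, |M i i| := Finset.abs_sum_le_sum_abs _ _
    _ ≤ ∑ _i : Fin n, frob M := Finset.sum_le_sum fun i _ => entry_abs_le_frob M i i
    _ = n * frob M := by simp [Finset.sum_const, nsmul_eq_mul]

end FrobLemmas

/-! ### Auxiliary lemmas about positive semidefinite matrices -/

section PSDLemmas
variable {n : ℕ}

lemma herm_transpose {M : Matrix (Fin n) (Fin n) ℝ} (h : M.IsHermitian) : Mᵀ = M := by
  rw [← Matrix.conjTranspose_eq_transpose_of_trivial]; exact h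

lemma psd_smul {M : Matrix (Fin n) (Fin n) ℝ} (h : M.PosSemidef) {c : ℝ} (hc : 0 ≤ c) :
    (c • M).PosSemidef := by
  refine ⟨?_, fun x => ?_⟩
  · unfold Matrix.IsHermitian
    rw [Matrix.conjTranspose_smul, h.1]
    simp
  · exact (h.smul hc).2 x

lemma psd_sum {N : ℕ} (θ : Fin N → ℝ) (V : Fin N → Matrix (Fin n) (Fin n) ℝ)
    (hθ : ∀ i, 0 ≤ θ i) (hV : ∀ i, (V i).PosSemidef) :
    (∑ i, θ i • V i).PosSemidef := by
  classical
  refine Finset.sum_induction _ _ (fun a b ha hb => ha.add hb) Matrix.PosSemidef.zero ?_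
  exact fun i _ => psd_smul (hV i) (hθ i)

lemma psd_diag_nonneg {M : Matrix (Fin n) (Fin n) ℝ} (h : M.PosSemidef) (i : Fin n) :
    0 ≤ M i i := by
  exact h.diag_nonneg

lemma psd_trace_nonneg {M : Matrix (Fin n) (Fin n) ℝ} (h : M.PosSemidef) : 0 ≤ M.trace := by
  rw [Matrix.trace]
  exact Finset.sum_nonneg fun i _ => psd_diag_nonneg h i

open scoped MatrixOrder in
lemma psd_eq_conjTranspose_mul_self {Y : Matrix (Fin n) (Fin n) ℝ} (hY : Y.PosSemidef) :
    ∃ B : Matrix (Fin n) (Fin n) ℝ, Y = Bᴴ * B := by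
  obtain ⟨B, hB⟩ := CStarAlgebra.nonneg_iff_eq_star_mul_self.mp hY.nonneg
  exact ⟨B, hB⟩

lemma trace_mul_nonneg {X Y : Matrix (Fin n) (Fin n) ℝ} (hX : X.PosSemidef)
    (hY : Y.PosSemidef) : 0 ≤ (X * Y).trace := by
  obtain ⟨B, rfl⟩ := psd_eq_conjTranspose_mul_self hY
  have h1 : X * (Bᴴ * B) = (X * Bᴴ) * B := by rw [Matrix.mul_assoc]
  rw [h1, Matrix.trace_mul_comm, ← Matrix.mul_assoc]
  exact psd_trace_nonneg (hX.mul_mul_conjTranspose_same B)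

lemma trace_mul_self_eq {M : Matrix (Fin n) (Fin n) ℝ} (h : Mᵀ = M) :
    (M * M).trace = frob M ^ 2 := by
  rw [frob, Real.sq_sqrt (Finset.sum_nonneg fun i _ => Finset.sum_nonneg fun j _ => sq_nonneg (M i j))]
  rw [Matrix.trace]
  refine Finset.sum_congr rfl fun i _ => ?_
  simp only [Matrix.diag_apply, Matrix.mul_apply]
  refine Finset.sum_congr rfl fun j _ => ?_
  have : M j i = M i j := ((congrFun (congrFun h j) i).symm).trans rfl
  rw [this, sq]

lemma frob_le_of_psd_le {X Y : Matrix (Fin n) (Fin n) ℝ} (hX : X.PosSemidef)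
    (hY : Y.PosSemidef) (h : (Y - X).PosSemidef) : frob X ≤ frob Y := by
  have hXs : Xᵀ = X := herm_transpose hX.1
  have hYs : Yᵀ = Y := herm_transpose hY.1
  have t1 : 0 ≤ (X * (Y - X)).trace := trace_mul_nonneg hX h
  have t2 : 0 ≤ ((Y - X) * Y).trace := trace_mul_nonneg h hY
  rw [Matrix.mul_sub, Matrix.trace_sub, sub_nonneg] at t1
  rw [Matrix.sub_mul, Matrix.trace_sub, sub_nonneg] at t2
  have key : frob X ^ 2 ≤ frob Y ^ 2 := by
    rw [← trace_mul_self_eq hXs, ← trace_mul_self_eq hYs]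
    exact le_trans t1 t2
  exact le_of_pow_le_pow_left₀ two_ne_zero (frob_nonneg Y) key

end PSDLemmas

/-! ### Core matrix-algebra lemmas for the resolvent map `K ↦ (K⁻¹ + S)⁻¹` -/

section Core
variable {n : ℕ}

lemma pd_mul_inv {K : Matrix (Fin n) (Fin n) ℝ} (hK : K.PosDef) : K * K⁻¹ = 1 :=
  Matrix.mul_nonsing_inv K ((Matrix.isUnit_iff_isUnit_det K).mp hK.isUnit)

lemma pd_inv_mul {K : Matrix (Fin n) (Fin n) ℝ} (hK : K.PosDef) : K⁻¹ * K = 1 :=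
  Matrix.nonsing_inv_mul K ((Matrix.isUnit_iff_isUnit_det K).mp hK.isUnit)

/-- `K - (K⁻¹+S)⁻¹ = (K⁻¹+S)⁻¹ * (S + S*K*S) * (K⁻¹+S)⁻¹`. -/
lemma loewner_identity {K S : Matrix (Fin n) (Fin n) ℝ} (hK : K.PosDef) (hS : S.PosSemidef) :
    K - (K⁻¹ + S)⁻¹ = (K⁻¹ + S)⁻¹ * (S + S * K * S) * (K⁻¹ + S)⁻¹ := by
  have hP : (K⁻¹ + S).PosDef := hK.inv.add_posSemidef hS
  set P := K⁻¹ + S with hPdef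
  have hPg : P * P⁻¹ = 1 := pd_mul_inv hP
  have hgP : P⁻¹ * P = 1 := pd_inv_mul hP
  have hKi : K⁻¹ * K = 1 := pd_inv_mul hK
  have hKi' : K * K⁻¹ = 1 := pd_mul_inv hK
  have hmain : P * (K - P⁻¹) * P = S + S * K * S := by
    have e1 : P * (K - P⁻¹) * P = P * K * P - P := by
      rw [Matrix.mul_sub, hPg, Matrix.sub_mul, Matrix.one_mul]
    have e2 : P * K * P = K⁻¹ + S + S + S * K * S := by
      rw [hPdef]
      rw [Matrix.add_mul, Matrix.add_mul, Matrix.mul_add, Matrix.mul_add, hKi]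
      rw [Matrix.mul_assoc S K K⁻¹, hKi', Matrix.mul_one]
      simp only [Matrix.one_mul]
      abel
    rw [e1, e2, hPdef]
    abel
  calc K - P⁻¹ = P⁻¹ * (P * (K - P⁻¹) * P) * P⁻¹ := by
        rw [Matrix.mul_assoc P _ P, ← Matrix.mul_assoc P⁻¹ P _, hgP, Matrix.one_mul,
          Matrix.mul_assoc, hPg, Matrix.mul_one]
    _ = P⁻¹ * (S + S * K * S) * P⁻¹ := by rw [hmain]

/-- Difference identity for the resolvent map. -/
lemma diff_identity {K₁ K₂ S : Matrix (Fin n) (Fin n) ℝ} (hK₁ : K₁.PosDef) (hK₂ : K₂.PosDef)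
    (hS : S.PosSemidef) :
    (K₁⁻¹ + S)⁻¹ - (K₂⁻¹ + S)⁻¹ =
      (1 - (K₁⁻¹ + S)⁻¹ * S) * (K₁ - K₂) * (1 - S * (K₂⁻¹ + S)⁻¹) := by
  have hP₁ : (K₁⁻¹ + S).PosDef := hK₁.inv.add_posSemidef hS
  have hP₂ : (K₂⁻¹ + S).PosDef := hK₂.inv.add_posSemidef hS
  set g₁ := (K₁⁻¹ + S)⁻¹ with hg₁
  set g₂ := (K₂⁻¹ + S)⁻¹ with hg₂
  have h1 : 1 - g₁ * S = g₁ * K₁⁻¹ := by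
    have h := pd_inv_mul hP₁
    rw [Matrix.mul_add] at h
    rw [← h]; abel
  have h2 : 1 - S * g₂ = K₂⁻¹ * g₂ := by
    have h := pd_mul_inv hP₂
    rw [Matrix.add_mul] at h
    rw [← h]; abel
  have e : K₁⁻¹ * (K₁ - K₂) * K₂⁻¹ = K₂⁻¹ - K₁⁻¹ := by
    rw [Matrix.mul_sub, pd_inv_mul hK₁, Matrix.sub_mul, Matrix.one_mul,
      Matrix.mul_assoc, pd_mul_inv hK₂, Matrix.mul_one]
  rw [h1, h2]
  symm
  calc g₁ * K₁⁻¹ * (K₁ - K₂) * (K₂⁻¹ * g₂)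
      = g₁ * (K₁⁻¹ * (K₁ - K₂) * K₂⁻¹) * g₂ := by
        simp only [Matrix.mul_assoc]
    _ = g₁ * (K₂⁻¹ - K₁⁻¹) * g₂ := by rw [e]
    _ = g₁ * ((K₂⁻¹ + S) - (K₁⁻¹ + S)) * g₂ := by
        congr 1; congr 1; abel
    _ = g₁ * ((K₂⁻¹ + S) * g₂) - (g₁ * (K₁⁻¹ + S)) * g₂ := by
        rw [Matrix.mul_sub, Matrix.sub_mul]
        simp only [Matrix.mul_assoc]
    _ = g₁ - g₂ := by rw [pd_mul_inv hP₂, pd_inv_mul hP₁, Matrix.mul_one, Matrix.one_mul]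

lemma g_posDef {K S : Matrix (Fin n) (Fin n) ℝ} (hK : K.PosDef) (hS : S.PosSemidef) :
    ((K⁻¹ + S)⁻¹).PosDef := (hK.inv.add_posSemidef hS).inv

lemma g_frob_le {K S : Matrix (Fin n) (Fin n) ℝ} (hK : K.PosDef) (hS : S.PosSemidef) :
    frob (K⁻¹ + S)⁻¹ ≤ frob K := by
  have hg : ((K⁻¹ + S)⁻¹).PosDef := g_posDef hK hS
  refine frob_le_of_psd_le hg.posSemidef hK.posSemidef ?_
  rw [loewner_identity hK hS]
  have hSKS : (S * K * S).PosSemidef := by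
    have h := hK.posSemidef.conjTranspose_mul_mul_same S
    rwa [hS.1] at h
  have h := (hS.add hSKS).conjTranspose_mul_mul_same (K⁻¹ + S)⁻¹
  rwa [hg.isHermitian] at h

/-- Uniform Lipschitz bound for the resolvent map. -/
lemma g_lip {K₁ K₂ S : Matrix (Fin n) (Fin n) ℝ} (hK₁ : K₁.PosDef) (hK₂ : K₂.PosDef)
    (hS : S.PosSemidef) {b v : ℝ} (hb₁ : frob K₁ ≤ b) (hb₂ : frob K₂ ≤ b)
    (hv : frob S ≤ v) :
    frob ((K₁⁻¹ + S)⁻¹ - (K₂⁻¹ + S)⁻¹) ≤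
      (frob (1 : Matrix (Fin n) (Fin n) ℝ) + b * v) ^ 2 * frob (K₁ - K₂) := by
  have hv0 : 0 ≤ v := le_trans (frob_nonneg S) hv
  have hb0 : 0 ≤ b := le_trans (frob_nonneg K₁) hb₁
  set e := frob (1 : Matrix (Fin n) (Fin n) ℝ) with he
  have hE₁ : frob (1 - (K₁⁻¹ + S)⁻¹ * S) ≤ e + b * v := by
    calc frob (1 - (K₁⁻¹ + S)⁻¹ * S) = frob ((1 : Matrix (Fin n) (Fin n) ℝ) +
          (-((K₁⁻¹ + S)⁻¹ * S))) := by rw [sub_eq_add_neg]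
      _ ≤ e + frob (-((K₁⁻¹ + S)⁻¹ * S)) := frob_add_le _ _
      _ = e + frob ((-1 : ℝ) • ((K₁⁻¹ + S)⁻¹ * S)) := by rw [neg_one_smul]
      _ = e + frob ((K₁⁻¹ + S)⁻¹ * S) := by rw [frob_smul]; simp
      _ ≤ e + frob (K₁⁻¹ + S)⁻¹ * frob S := by
          have := frob_mul_le (K₁⁻¹ + S)⁻¹ S; linarith
      _ ≤ e + b * v := by
          have h1 := g_frob_le hK₁ hS
          have h2 := frob_nonneg (K₁⁻¹ + S)⁻¹
          have h3 := frob_nonneg S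
          nlinarith
  have hE₂ : frob (1 - S * (K₂⁻¹ + S)⁻¹) ≤ e + b * v := by
    calc frob (1 - S * (K₂⁻¹ + S)⁻¹) = frob ((1 : Matrix (Fin n) (Fin n) ℝ) +
          (-(S * (K₂⁻¹ + S)⁻¹))) := by rw [sub_eq_add_neg]
      _ ≤ e + frob (-(S * (K₂⁻¹ + S)⁻¹)) := frob_add_le _ _
      _ = e + frob ((-1 : ℝ) • (S * (K₂⁻¹ + S)⁻¹)) := by rw [neg_one_smul]
      _ = e + frob (S * (K₂⁻¹ + S)⁻¹) := by rw [frob_smul]; simp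
      _ ≤ e + frob S * frob (K₂⁻¹ + S)⁻¹ := by
          have := frob_mul_le S (K₂⁻¹ + S)⁻¹; linarith
      _ ≤ e + b * v := by
          have h1 := g_frob_le hK₂ hS
          have h2 := frob_nonneg (K₂⁻¹ + S)⁻¹
          have h3 := frob_nonneg S
          nlinarith
  have he0 : 0 ≤ e := frob_nonneg _
  rw [diff_identity hK₁ hK₂ hS]
  calc frob ((1 - (K₁⁻¹ + S)⁻¹ * S) * (K₁ - K₂) * (1 - S * (K₂⁻¹ + S)⁻¹))
      ≤ frob ((1 - (K₁⁻¹ + S)⁻¹ * S) * (K₁ - K₂)) * frob (1 - S * (K₂⁻¹ + S)⁻¹) :=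
        frob_mul_le _ _
    _ ≤ frob (1 - (K₁⁻¹ + S)⁻¹ * S) * frob (K₁ - K₂) * frob (1 - S * (K₂⁻¹ + S)⁻¹) := by
        have h1 := frob_mul_le (1 - (K₁⁻¹ + S)⁻¹ * S) (K₁ - K₂)
        have h2 := frob_nonneg (1 - S * (K₂⁻¹ + S)⁻¹)
        exact mul_le_mul_of_nonneg_right h1 h2
    _ ≤ (e + b * v) ^ 2 * frob (K₁ - K₂) := by
        have h2 := frob_nonneg (1 - S * (K₂⁻¹ + S)⁻¹)
        have h3 := frob_nonneg (K₁ - K₂)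
        have step1 : frob (1 - (K₁⁻¹ + S)⁻¹ * S) * frob (K₁ - K₂) ≤
            (e + b * v) * frob (K₁ - K₂) := mul_le_mul_of_nonneg_right hE₁ h3
        have step2 : frob (1 - (K₁⁻¹ + S)⁻¹ * S) * frob (K₁ - K₂) *
              frob (1 - S * (K₂⁻¹ + S)⁻¹) ≤ ((e + b * v) * frob (K₁ - K₂)) * (e + b * v) :=
          mul_le_mul step1 hE₂ h2
            (mul_nonneg (add_nonneg he0 (mul_nonneg hb0 hv0)) h3)
        calc frob (1 - (K₁⁻¹ + S)⁻¹ * S) * frob (K₁ - K₂) * frob (1 - S * (K₂⁻¹ + S)⁻¹)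
            ≤ ((e + b * v) * frob (K₁ - K₂)) * (e + b * v) := step2
          _ = (e + b * v) ^ 2 * frob (K₁ - K₂) := by ring

end Core

/-! ### Lemmas about schedules, `hfun`, and the cost -/

section Main
variable {n N : ℕ}

lemma theta_le_one {θ : ℕ → Fin N → ℝ} (hθ : isRelaxedSchedule θ) (k : ℕ) (i : Fin N) :
    θ k i ≤ 1 := by
  rcases hθ k with ⟨hpos, hsum⟩
  calc θ k i ≤ ∑ j, θ k j :=
        Finset.single_le_sum (f := fun j => θ k j) (fun j _ => hpos j) (Finset.mem_univ i)
    _ = 1 := hsum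

lemma S_frob_le (V : ℕ → Fin N → Matrix (Fin n) (Fin n) ℝ) {θ : ℕ → Fin N → ℝ}
    (hθ : isRelaxedSchedule θ) (k : ℕ) :
    frob (∑ i, θ k i • V k i) ≤ ∑ i, frob (V k i) := by
  calc frob (∑ i, θ k i • V k i) ≤ ∑ i, frob (θ k i • V k i) := frob_sum_le _ _
    _ ≤ ∑ i, frob (V k i) := by
        refine Finset.sum_le_sum fun i _ => ?_
        rw [frob_smul, abs_of_nonneg ((hθ k).1 i)]
        exact mul_le_of_le_one_left (frob_nonneg _) (theta_le_one hθ k i)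

lemma hfun_posDef {Ak Qk M : Matrix (Fin n) (Fin n) ℝ} (hQk : Qk.PosDef) (hM : M.PosSemidef) :
    (hfun Ak Qk M).PosDef := by
  unfold hfun
  have h := hM.conjTranspose_mul_mul_same Ak
  rw [Matrix.conjTranspose_eq_transpose_of_trivial] at h
  exact Matrix.PosDef.posSemidef_add h hQk

lemma hfun_frob_le (Ak Qk M : Matrix (Fin n) (Fin n) ℝ) :
    frob (hfun Ak Qk M) ≤ frob Ak ^ 2 * frob M + frob Qk := by
  unfold hfun
  have h1 : frob (Akᵀ * M * Ak) ≤ frob Ak ^ 2 * frob M := by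
    calc frob (Akᵀ * M * Ak) ≤ frob (Akᵀ * M) * frob Ak := frob_mul_le _ _
      _ ≤ frob Akᵀ * frob M * frob Ak :=
          mul_le_mul_of_nonneg_right (frob_mul_le _ _) (frob_nonneg _)
      _ = frob Ak ^ 2 * frob M := by rw [frob_transpose]; ring
  have h2 := frob_add_le (Akᵀ * M * Ak) Qk
  linarith

lemma hfun_diff (Ak Qk M₁ M₂ : Matrix (Fin n) (Fin n) ℝ) :
    hfun Ak Qk M₁ - hfun Ak Qk M₂ = Akᵀ * (M₁ - M₂) * Ak := by
  unfold hfun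
  rw [Matrix.mul_sub, Matrix.sub_mul]
  abel

lemma trace_term_lip {K₁ K₂ S Wk : Matrix (Fin n) (Fin n) ℝ} (hK₁ : K₁.PosDef)
    (hK₂ : K₂.PosDef) (hS : S.PosSemidef) {b v : ℝ} (hb₁ : frob K₁ ≤ b) (hb₂ : frob K₂ ≤ b)
    (hv : frob S ≤ v) :
    |((K₁⁻¹ + S)⁻¹ * Wk).trace - ((K₂⁻¹ + S)⁻¹ * Wk).trace| ≤
      (n * frob Wk * (frob (1 : Matrix (Fin n) (Fin n) ℝ) + b * v) ^ 2) * frob (K₁ - K₂) := by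
  have h1 : ((K₁⁻¹ + S)⁻¹ * Wk).trace - ((K₂⁻¹ + S)⁻¹ * Wk).trace
      = ((((K₁⁻¹ + S)⁻¹ - (K₂⁻¹ + S)⁻¹)) * Wk).trace := by
    rw [Matrix.sub_mul, Matrix.trace_sub]
  rw [h1]
  have hg := g_lip hK₁ hK₂ hS hb₁ hb₂ hv
  have hn : (0:ℝ) ≤ (n:ℝ) := Nat.cast_nonneg n
  have hW0 := frob_nonneg Wk
  calc |((((K₁⁻¹ + S)⁻¹ - (K₂⁻¹ + S)⁻¹)) * Wk).trace|
      ≤ n * frob (((K₁⁻¹ + S)⁻¹ - (K₂⁻¹ + S)⁻¹) * Wk) := trace_abs_le _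
    _ ≤ n * (frob ((K₁⁻¹ + S)⁻¹ - (K₂⁻¹ + S)⁻¹) * frob Wk) :=
        mul_le_mul_of_nonneg_left (frob_mul_le _ _) hn
    _ ≤ n * (((frob (1 : Matrix (Fin n) (Fin n) ℝ) + b * v) ^ 2 * frob (K₁ - K₂)) * frob Wk) :=
        mul_le_mul_of_nonneg_left (mul_le_mul_of_nonneg_right hg hW0) hn
    _ = (n * frob Wk * (frob (1 : Matrix (Fin n) (Fin n) ℝ) + b * v) ^ 2) * frob (K₁ - K₂) := by
        ring

lemma cost_nonneg (A Q W : ℕ → Matrix (Fin n) (Fin n) ℝ)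
    (V : ℕ → Fin N → Matrix (Fin n) (Fin n) ℝ)
    (hQ : ∀ k, (Q k).PosDef) (hV : ∀ k i, (V k i).PosSemidef) (hW : ∀ k, (W k).PosSemidef) :
    ∀ t K, K.PosDef → ∀ θ : ℕ → Fin N → ℝ, isRelaxedSchedule θ →
      0 ≤ relaxCost A Q W V θ t K := by
  intro t
  induction t with
  | zero =>
    intro K hK θ hθ
    simp only [relaxCost]
    exact trace_mul_nonneg (g_posDef hK (psd_sum (θ 0) (V 0) (hθ 0).1 (hV 0))).posSemidef (hW 0)
  | succ t ih =>
    intro K hK θ hθ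
    simp only [relaxCost]
    have hS := psd_sum (θ (t+1)) (V (t+1)) (hθ (t+1)).1 (hV (t+1))
    have hg := g_posDef hK hS
    refine add_nonneg (trace_mul_nonneg hg.posSemidef (hW (t+1))) ?_
    exact ih _ (hfun_posDef (hQ (t+1)) hg.posSemidef) θ hθ

lemma cost_lip (A Q W : ℕ → Matrix (Fin n) (Fin n) ℝ)
    (V : ℕ → Fin N → Matrix (Fin n) (Fin n) ℝ)
    (hQ : ∀ k, (Q k).PosDef) (hV : ∀ k i, (V k i).PosSemidef) (hW : ∀ k, (W k).PosSemidef) :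
    ∀ t : ℕ, ∀ b : ℝ, 0 < b → ∃ c : ℝ, 0 < c ∧ ∀ θ : ℕ → Fin N → ℝ, isRelaxedSchedule θ →
      ∀ K₁ K₂ : Matrix (Fin n) (Fin n) ℝ, K₁.PosDef → K₂.PosDef →
      frob K₁ ≤ b → frob K₂ ≤ b →
      |relaxCost A Q W V θ t K₁ - relaxCost A Q W V θ t K₂| ≤ c * frob (K₁ - K₂) := by
  intro t
  induction t with
  | zero =>
    intro b hb
    set T1 := (n : ℝ) * frob (W 0) * (frob (1 : Matrix (Fin n) (Fin n) ℝ) + b * (∑ i, frob (V 0 i))) ^ 2 with hT1def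
    have hT1 : 0 ≤ T1 :=
      mul_nonneg (mul_nonneg (Nat.cast_nonneg n) (frob_nonneg _)) (sq_nonneg _)
    refine ⟨T1 + 1, by linarith, ?_⟩
    intro θ hθ K₁ K₂ hK₁ hK₂ hb₁ hb₂
    simp only [relaxCost]
    have hS := psd_sum (θ 0) (V 0) (hθ 0).1 (hV 0)
    have h := trace_term_lip (Wk := W 0) hK₁ hK₂ hS hb₁ hb₂ (S_frob_le V hθ 0)
    have hΔ := frob_nonneg (K₁ - K₂)
    have hbr : (n : ℝ) * frob (W 0) *
        (frob (1 : Matrix (Fin n) (Fin n) ℝ) + b * (∑ i, frob (V 0 i))) ^ 2 * frob (K₁ - K₂) =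
        T1 * frob (K₁ - K₂) := by rw [hT1def]
    have expand : (T1 + 1) * frob (K₁ - K₂) = T1 * frob (K₁ - K₂) + frob (K₁ - K₂) := by ring
    rw [expand]
    linarith
  | succ t ih =>
    intro b hb
    set v := ∑ i, frob (V (t+1) i) with hvdef
    have hv0 : 0 ≤ v := Finset.sum_nonneg fun _ _ => frob_nonneg _
    set fA := frob (A (t+1)) with hfA
    set b' := fA ^ 2 * b + frob (Q (t+1)) + 1 with hb'def
    have hb'pos : 0 < b' := by
      have := mul_nonneg (sq_nonneg fA) hb.le
      have := frob_nonneg (Q (t+1))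
      rw [hb'def]; linarith
    obtain ⟨c', hc', H⟩ := ih b' hb'pos
    set T1 := (n : ℝ) * frob (W (t+1)) * (frob (1 : Matrix (Fin n) (Fin n) ℝ) + b * v) ^ 2 with hT1def
    have hT1 : 0 ≤ T1 :=
      mul_nonneg (mul_nonneg (Nat.cast_nonneg n) (frob_nonneg _)) (sq_nonneg _)
    set T2 := c' * (fA ^ 2 * (frob (1 : Matrix (Fin n) (Fin n) ℝ) + b * v) ^ 2) with hT2def
    have hT2 : 0 ≤ T2 := mul_nonneg hc'.le (mul_nonneg (sq_nonneg _) (sq_nonneg _))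
    refine ⟨T1 + T2 + 1, by linarith, ?_⟩
    intro θ hθ K₁ K₂ hK₁ hK₂ hb₁ hb₂
    simp only [relaxCost]
    set S := ∑ i, θ (t+1) i • V (t+1) i with hSdef
    have hS : S.PosSemidef := psd_sum (θ (t+1)) (V (t+1)) (hθ (t+1)).1 (hV (t+1))
    have hSv : frob S ≤ v := S_frob_le V hθ (t+1)
    have hg₁ := g_posDef hK₁ hS
    have hg₂ := g_posDef hK₂ hS
    have hterm := trace_term_lip (Wk := W (t+1)) hK₁ hK₂ hS hb₁ hb₂ hSv
    -- the updated states
    have hK₁' : (hfun (A (t+1)) (Q (t+1)) (K₁⁻¹ + S)⁻¹).PosDef :=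
      hfun_posDef (hQ (t+1)) hg₁.posSemidef
    have hK₂' : (hfun (A (t+1)) (Q (t+1)) (K₂⁻¹ + S)⁻¹).PosDef :=
      hfun_posDef (hQ (t+1)) hg₂.posSemidef
    have hfb₁ : frob (hfun (A (t+1)) (Q (t+1)) (K₁⁻¹ + S)⁻¹) ≤ b' := by
      have h1 := hfun_frob_le (A (t+1)) (Q (t+1)) (K₁⁻¹ + S)⁻¹
      have h2 : frob (K₁⁻¹ + S)⁻¹ ≤ b := le_trans (g_frob_le hK₁ hS) hb₁
      have h3 : fA ^ 2 * frob (K₁⁻¹ + S)⁻¹ ≤ fA ^ 2 * b :=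
        mul_le_mul_of_nonneg_left h2 (sq_nonneg _)
      rw [hb'def]; linarith
    have hfb₂ : frob (hfun (A (t+1)) (Q (t+1)) (K₂⁻¹ + S)⁻¹) ≤ b' := by
      have h1 := hfun_frob_le (A (t+1)) (Q (t+1)) (K₂⁻¹ + S)⁻¹
      have h2 : frob (K₂⁻¹ + S)⁻¹ ≤ b := le_trans (g_frob_le hK₂ hS) hb₂
      have h3 : fA ^ 2 * frob (K₂⁻¹ + S)⁻¹ ≤ fA ^ 2 * b :=
        mul_le_mul_of_nonneg_left h2 (sq_nonneg _)
      rw [hb'def]; linarith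
    have hrec := H θ hθ _ _ hK₁' hK₂' hfb₁ hfb₂
    have hdiff : frob (hfun (A (t+1)) (Q (t+1)) (K₁⁻¹ + S)⁻¹ -
        hfun (A (t+1)) (Q (t+1)) (K₂⁻¹ + S)⁻¹) ≤
        fA ^ 2 * ((frob (1 : Matrix (Fin n) (Fin n) ℝ) + b * v) ^ 2 * frob (K₁ - K₂)) := by
      rw [hfun_diff]
      have hg := g_lip hK₁ hK₂ hS hb₁ hb₂ hSv
      calc frob ((A (t+1))ᵀ * ((K₁⁻¹ + S)⁻¹ - (K₂⁻¹ + S)⁻¹) * A (t+1))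
          ≤ frob ((A (t+1))ᵀ * ((K₁⁻¹ + S)⁻¹ - (K₂⁻¹ + S)⁻¹)) * frob (A (t+1)) :=
            frob_mul_le _ _
        _ ≤ (frob (A (t+1))ᵀ * frob ((K₁⁻¹ + S)⁻¹ - (K₂⁻¹ + S)⁻¹)) * frob (A (t+1)) :=
            mul_le_mul_of_nonneg_right (frob_mul_le _ _) (frob_nonneg _)
        _ = fA ^ 2 * frob ((K₁⁻¹ + S)⁻¹ - (K₂⁻¹ + S)⁻¹) := by
            rw [frob_transpose]; ring
        _ ≤ fA ^ 2 * ((frob (1 : Matrix (Fin n) (Fin n) ℝ) + b * v) ^ 2 * frob (K₁ - K₂)) :=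
            mul_le_mul_of_nonneg_left hg (sq_nonneg _)
    have hsec : |relaxCost A Q W V θ t (hfun (A (t+1)) (Q (t+1)) (K₁⁻¹ + S)⁻¹) -
        relaxCost A Q W V θ t (hfun (A (t+1)) (Q (t+1)) (K₂⁻¹ + S)⁻¹)| ≤
        T2 * frob (K₁ - K₂) := by
      have h4 : c' * frob (hfun (A (t+1)) (Q (t+1)) (K₁⁻¹ + S)⁻¹ -
          hfun (A (t+1)) (Q (t+1)) (K₂⁻¹ + S)⁻¹) ≤
          c' * (fA ^ 2 * ((frob (1 : Matrix (Fin n) (Fin n) ℝ) + b * v) ^ 2 * frob (K₁ - K₂))) :=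
        mul_le_mul_of_nonneg_left hdiff hc'.le
      have h5 : c' * (fA ^ 2 * ((frob (1 : Matrix (Fin n) (Fin n) ℝ) + b * v) ^ 2 * frob (K₁ - K₂))) = T2 * frob (K₁ - K₂) := by
        rw [hT2def]; ring
      linarith
    have habs : ∀ x₁ y₁ x₂ y₂ : ℝ, |x₁ + y₁ - (x₂ + y₂)| ≤ |x₁ - x₂| + |y₁ - y₂| := by
      intro x₁ y₁ x₂ y₂
      have : x₁ + y₁ - (x₂ + y₂) = (x₁ - x₂) + (y₁ - y₂) := by ring
      rw [this]; exact abs_add_le _ _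
    have hΔ := frob_nonneg (K₁ - K₂)
    have hbr : (n : ℝ) * frob (W (t+1)) *
        (frob (1 : Matrix (Fin n) (Fin n) ℝ) + b * v) ^ 2 * frob (K₁ - K₂) =
        T1 * frob (K₁ - K₂) := by rw [hT1def]
    have expand : (T1 + T2 + 1) * frob (K₁ - K₂) =
        T1 * frob (K₁ - K₂) + T2 * frob (K₁ - K₂) + frob (K₁ - K₂) := by ring
    rw [expand]
    calc |(((K₁⁻¹ + S)⁻¹ * W (t+1)).trace +
            relaxCost A Q W V θ t (hfun (A (t+1)) (Q (t+1)) (K₁⁻¹ + S)⁻¹)) -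
          (((K₂⁻¹ + S)⁻¹ * W (t+1)).trace +
            relaxCost A Q W V θ t (hfun (A (t+1)) (Q (t+1)) (K₂⁻¹ + S)⁻¹))|
        ≤ |((K₁⁻¹ + S)⁻¹ * W (t+1)).trace - ((K₂⁻¹ + S)⁻¹ * W (t+1)).trace| +
          |relaxCost A Q W V θ t (hfun (A (t+1)) (Q (t+1)) (K₁⁻¹ + S)⁻¹) -
            relaxCost A Q W V θ t (hfun (A (t+1)) (Q (t+1)) (K₂⁻¹ + S)⁻¹)| := habs _ _ _ _
      _ ≤ T1 * frob (K₁ - K₂) + T2 * frob (K₁ - K₂) + frob (K₁ - K₂) := by linarith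

end Main

/-- local Lipschitz continuity of the relaxed value function.  For every
`t` and every bound `b > 0` there exists `c > 0` such that for all positive definite
`M₁, M₂` with Frobenius norm at most `b`,
`|U^o_t(M₁) − U^o_t(M₂)| ≤ c ‖M₁ − M₂‖_F`. -/
theorem valueUo_locally_lipschitz {n N : ℕ} [NeZero N]
    (A Q W : ℕ → Matrix (Fin n) (Fin n) ℝ)
    (V : ℕ → Fin N → Matrix (Fin n) (Fin n) ℝ)
    (hQ : ∀ k, (Q k).PosDef) (hV : ∀ k i, (V k i).PosSemidef)
    (hW : ∀ k, (W k).PosSemidef) :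
    ∀ t : ℕ, ∀ b : ℝ, 0 < b → ∃ c : ℝ, 0 < c ∧
      ∀ M₁ M₂ : Matrix (Fin n) (Fin n) ℝ, M₁.PosDef → M₂.PosDef →
        frob M₁ ≤ b → frob M₂ ≤ b →
        |valueUo A Q W V t M₁ - valueUo A Q W V t M₂| ≤ c * frob (M₁ - M₂) := by
  intro t b hb
  obtain ⟨c, hc, H⟩ := cost_lip A Q W V hQ hV hW t b hb
  refine ⟨c, hc, ?_⟩
  intro M₁ M₂ h₁ h₂ hb₁ hb₂
  have hne : Nonempty {θ : ℕ → Fin N → ℝ // isRelaxedSchedule θ} := by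
    refine ⟨⟨fun _ _ => (N : ℝ)⁻¹, fun k => ⟨fun i => by positivity, ?_⟩⟩⟩
    rw [Finset.sum_const, Finset.card_univ, Fintype.card_fin, nsmul_eq_mul]
    exact mul_inv_cancel₀ (Nat.cast_ne_zero.mpr (NeZero.ne N))
  have key : ∀ (X Y : Matrix (Fin n) (Fin n) ℝ), X.PosDef → Y.PosDef →
      frob X ≤ b → frob Y ≤ b →
      valueUo A Q W V t X ≤ valueUo A Q W V t Y + c * frob (X - Y) := by
    intro X Y hX hY hbX hbY
    have hbddX : BddBelow (Set.range fun θ : {θ : ℕ → Fin N → ℝ // isRelaxedSchedule θ} =>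
        relaxCost A Q W V θ.1 t X) := by
      refine ⟨0, ?_⟩
      rintro x ⟨θ, rfl⟩
      exact cost_nonneg A Q W V hQ hV hW t X hX θ.1 θ.2
    have step : ∀ θ : {θ : ℕ → Fin N → ℝ // isRelaxedSchedule θ},
        valueUo A Q W V t X - c * frob (X - Y) ≤ relaxCost A Q W V θ.1 t Y := by
      intro θ
      have h := H θ.1 θ.2 X Y hX hY hbX hbY
      have h1 : relaxCost A Q W V θ.1 t X ≤ relaxCost A Q W V θ.1 t Y + c * frob (X - Y) := by
        have := (abs_sub_le_iff.mp h).1; linarith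
      have h2 : valueUo A Q W V t X ≤ relaxCost A Q W V θ.1 t X := by
        rw [valueUo]; exact ciInf_le hbddX θ
      linarith
    have h3 : valueUo A Q W V t X - c * frob (X - Y) ≤ valueUo A Q W V t Y := by
      rw [valueUo]; exact le_ciInf step
    linarith
  have k1 := key M₁ M₂ h₁ h₂ hb₁ hb₂
  have k2 := key M₂ M₁ h₂ h₁ hb₂ hb₁
  rw [frob_sub_rev M₂ M₁] at k2
  rw [abs_sub_le_iff]
  constructor <;> linarith
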